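/- Let d_1, ..., d_7 be positive reals with d_7 ≤ d_i for all i, and let x, y_1, ..., y_6 ∈ ℝ² be points such that |x − y_i| ≤ d_7 + d_i for each i and |y_i − y_j| > d_i + d_j for all i ≠ j. Then this configuration is impossible. -/

import Mathlib

open Real

lemma pair_close (a b : ℂ) (ha : a ≠ 0) (hb : b ≠ 0)
    (h : 1/2 ≤ Real.cos (a.arg - b.arg)) :
    ‖a - b‖ ≤ max ‖a‖ ‖b‖ := by
  have hA : 0 < ‖a‖ := norm_pos_iff.mpr ha
  have hB : 0 < ‖b‖ := norm_pos_iff.mpr hb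
  rw [Real.cos_sub, Complex.cos_arg ha, Complex.cos_arg hb, Complex.sin_arg,
    Complex.sin_arg, div_mul_div_comm, div_mul_div_comm, ← add_div,
    le_div_iff₀ (by positivity)] at h
  have e1 : ‖a-b‖^2 = (a.re-b.re)^2+(a.im-b.im)^2 := by
    rw [Complex.sq_norm, Complex.normSq_apply]; simp [Complex.sub_re, Complex.sub_im]; ring
  have e2 : ‖a‖^2 = a.re^2+a.im^2 := by
    rw [Complex.sq_norm, Complex.normSq_apply]; ring
  have e3 : ‖b‖^2 = b.re^2+b.im^2 := by
    rw [Complex.sq_norm, Complex.normSq_apply]; ring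
  have hsq : ‖a-b‖^2 ≤ (max ‖a‖ ‖b‖)^2 := by
    rcases le_total ‖a‖ ‖b‖ with hab | hab
    · rw [max_eq_right hab]; nlinarith
    · rw [max_eq_left hab]; nlinarith
  have := Real.sqrt_le_sqrt hsq
  rwa [Real.sqrt_sq (norm_nonneg _),
    Real.sqrt_sq (le_max_of_le_left (norm_nonneg _))] at this

lemma pigeon (θ : Fin 6 → ℝ) (hθ : ∀ i, θ i ∈ Set.Ioc (-π) π) :
    ∃ i j, i ≠ j ∧ 1/2 ≤ Real.cos (θ i - θ j) := by
  by_contra hc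
  push_neg at hc
  set σ := Tuple.sort θ with hσ
  set φ := θ ∘ σ with hφ
  have hmono : Monotone φ := Tuple.monotone_sort θ
  have hgap : ∀ k l : Fin 6, k < l → π/3 < φ l - φ k ∧ φ l - φ k < 5*π/3 := by
    intro k l hkl
    have hne : σ l ≠ σ k := fun h => absurd (σ.injective h) (ne_of_gt hkl)
    have h1 : Real.cos (φ l - φ k) < 1/2 := hc (σ l) (σ k) hne
    have hd0 : 0 ≤ φ l - φ k := sub_nonneg.2 (hmono hkl.le)
    have hub : φ l - φ k < 2*π := by
      have h2 := (hθ (σ l)).2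
      have h3 := (hθ (σ k)).1
      simp only [hφ, Function.comp_apply]
      linarith
    have hpi := Real.pi_pos
    constructor
    · by_contra hle
      push_neg at hle
      have : (1:ℝ)/2 ≤ Real.cos (φ l - φ k) := by
        rw [← Real.cos_pi_div_three]
        exact Real.cos_le_cos_of_nonneg_of_le_pi hd0 (by linarith) hle
      linarith
    · by_contra hge
      push_neg at hge
      have h4 : Real.cos (φ l - φ k) = Real.cos (2*π - (φ l - φ k)) := by
        rw [Real.cos_two_pi_sub]
      have : (1:ℝ)/2 ≤ Real.cos (2*π - (φ l - φ k)) := by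
        rw [← Real.cos_pi_div_three]
        exact Real.cos_le_cos_of_nonneg_of_le_pi (by linarith) (by linarith) (by linarith)
      linarith
  have g01 := (hgap 0 1 (by decide)).1
  have g12 := (hgap 1 2 (by decide)).1
  have g23 := (hgap 2 3 (by decide)).1
  have g34 := (hgap 3 4 (by decide)).1
  have g45 := (hgap 4 5 (by decide)).1
  have g05 := (hgap 0 5 (by decide)).2
  linarith

/-- Metric core of the disk lemma: there are no positive reals `d₁, …, d₇` with
`d₇ ≤ dᵢ` and points `x, y₁, …, y₆ ∈ ℝ²` with `|x − yᵢ| ≤ d₇ + dᵢ` and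
`|yᵢ − yⱼ| > dᵢ + dⱼ` for `i ≠ j`. -/
theorem no_metric_disk_configuration :
    ¬ ∃ (d : Fin 7 → ℝ) (x : EuclideanSpace ℝ (Fin 2))
        (y : Fin 6 → EuclideanSpace ℝ (Fin 2)),
      (∀ i, 0 < d i) ∧ (∀ i, d 6 ≤ d i) ∧
      (∀ i : Fin 6, dist x (y i) ≤ d 6 + d i.castSucc) ∧
      (∀ i j : Fin 6, i ≠ j → d i.castSucc + d j.castSucc < dist (y i) (y j)) := by
  rintro ⟨d, x, y, hd, hd7, hxy, hyy⟩
  set e : ℂ ≃ₗᵢ[ℝ] EuclideanSpace ℝ (Fin 2) :=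
    Complex.isometryOfOrthonormal (EuclideanSpace.basisFun (Fin 2) ℝ) with he
  set c : Fin 6 → ℂ := fun i => e.symm (y i - x) with hcdef
  have hne : ∀ i, y i ≠ x := by
    intro i hyi
    obtain ⟨j, hj⟩ := exists_ne i
    have h1 := hyy i j (Ne.symm hj)
    rw [hyi] at h1
    have h2 := hxy j
    have h3 := hd7 i.castSucc
    linarith
  have hc0 : ∀ i, c i ≠ 0 := by
    intro i h
    apply hne i
    have := e.symm.injective (h.trans (map_zero e.symm).symm)
    rwa [sub_eq_zero] at this
  have habs : ∀ i, ‖c i‖ = dist x (y i) := by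
    intro i
    rw [hcdef]
    simp only [LinearIsometryEquiv.norm_map]
    rw [← dist_eq_norm, dist_comm]
  have habs2 : ∀ i j, ‖c i - c j‖ = dist (y i) (y j) := by
    intro i j
    rw [hcdef]
    simp only [← map_sub]
    rw [LinearIsometryEquiv.norm_map]
    have : (y i - x) - (y j - x) = y i - y j := by abel
    rw [this, ← dist_eq_norm]
  obtain ⟨i, j, hij, hcos⟩ := pigeon (fun i => (c i).arg) (fun i => Complex.arg_mem_Ioc _)
  have key := pair_close (c i) (c j) (hc0 i) (hc0 j) hcos
  rw [habs2, habs, habs] at key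
  have h1 := hxy i
  have h2 := hxy j
  have h3 := hyy i j hij
  have h4 := hd7 i.castSucc
  have h5 := hd7 j.castSucc
  have : dist (y i) (y j) ≤ d i.castSucc + d j.castSucc :=
    le_trans key (max_le (by linarith) (by linarith))
  linarith
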